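/- Let κ > 0 and x, y ∈ ℝ² with x ≠ y. Define E(κ,x,y) = ∫_{S¹} α α^T e^{iκ α·(x−y)} dα, where α ranges over the unit circle and α α^T is the 2×2 outer product. Then E(κ,x,y) = π Q^T diag(J_0(z) − J_2(z), J_0(z) + J_2(z)) Q, where z = κ|x−y| and Q is any rotation matrix mapping (x−y)/|x−y| to the first standard basis vector. -/

import Mathlib

open MeasureTheory Real Complex Filter Matrix

/-- Bessel function of the first kind of integer order `n`. -/
noncomputable def besselJ (n : ℤ) (z : ℂ) : ℂ :=
  ∑' m : ℕ, ((-1 : ℂ) ^ m / ((m.factorial : ℂ) * Complex.Gamma ((m : ℂ) + (n : ℂ) + 1))) *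
    (z / 2) ^ (2 * (m : ℤ) + n)

/-- Point on the unit circle with angle `θ`. -/
noncomputable def circVec (θ : ℝ) : Fin 2 → ℝ := ![Real.cos θ, Real.sin θ]

/-- `E(κ,x,y) = ∫_{S¹} α α^T e^{iκ α·(x−y)} dα`, the arc-length integral computed entrywise via
the parametrization `α = (cos θ, sin θ)`. -/
noncomputable def Emat (κ : ℝ) (x y : EuclideanSpace ℝ (Fin 2)) : Matrix (Fin 2) (Fin 2) ℂ :=
  Matrix.of fun i j => ∫ θ in (0:ℝ)..(2 * π),
    ((circVec θ i : ℂ) * (circVec θ j : ℂ)) *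
      Complex.exp (Complex.I * (κ : ℂ) *
        ((circVec θ 0 * (x 0 - y 0) + circVec θ 1 * (x 1 - y 1) : ℝ) : ℂ))



section EmatProofAux

lemma exp_tsum (w : ℂ) : Complex.exp w = ∑' k : ℕ, w ^ k / (k.factorial : ℂ) := by
  rw [Complex.exp_eq_exp_ℂ, NormedSpace.exp_eq_tsum_div]

lemma swap_lemma (g : ℝ → ℝ) (hg : Continuous g) (hb : ∀ θ, |g θ| ≤ 1) (z : ℝ) :
    ∫ θ in (0:ℝ)..(2*π), (g θ : ℂ) * Complex.exp (Complex.I * z * Real.cos θ) =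
      ∑' k : ℕ, (Complex.I * z)^k / (k.factorial : ℂ) *
        ((∫ θ in (0:ℝ)..(2*π), g θ * Real.cos θ ^ k : ℝ) : ℂ) := by
  have h2π : (0:ℝ) ≤ 2 * π := by positivity
  set F : ℕ → ℝ → ℂ := fun k θ => (g θ : ℂ) * ((Complex.I * z * Real.cos θ)^k / (k.factorial : ℂ))
  have hFcont : ∀ k, Continuous (F k) := by
    intro k
    fun_prop
  have hFint : ∀ k, IntegrableOn (F k) (Set.Ioc 0 (2*π)) := fun k =>
    (hFcont k).integrableOn_Ioc
  have hFnorm : ∀ k θ, ‖F k θ‖ ≤ |z|^k / k.factorial := by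
    intro k θ
    have h1 : ‖F k θ‖ = |g θ| * (‖Complex.I * z * Real.cos θ‖^k / k.factorial) := by
      simp [F, norm_mul, norm_pow, Complex.norm_real]
    rw [h1]
    have h2 : ‖Complex.I * (z:ℂ) * (Real.cos θ : ℂ)‖ ≤ |z| := by
      rw [norm_mul, norm_mul, Complex.norm_I, one_mul, Complex.norm_real, Complex.norm_real,
        Real.norm_eq_abs, Real.norm_eq_abs]
      calc |z| * |Real.cos θ| ≤ |z| * 1 :=
            mul_le_mul_of_nonneg_left (abs_cos_le_one θ) (abs_nonneg z)
        _ = |z| := mul_one _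
    calc |g θ| * (‖Complex.I * z * Real.cos θ‖^k / k.factorial)
        ≤ 1 * (|z|^k / k.factorial) := by
          apply mul_le_mul (hb θ)
          · apply div_le_div_of_nonneg_right ?_ ?_ |>.trans_eq rfl
            · exact pow_le_pow_left₀ (norm_nonneg _) h2 k
            · positivity
          · positivity
          · norm_num
      _ = |z|^k / k.factorial := one_mul _
  have hsum : Summable (fun k => ∫ θ in Set.Ioc (0:ℝ) (2*π), ‖F k θ‖) := by
    refine Summable.of_nonneg_of_le (fun k => integral_nonneg fun θ => norm_nonneg _)
      (fun k => ?_) ((Real.summable_pow_div_factorial |z|).mul_left (2*π))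
    calc ∫ θ in Set.Ioc (0:ℝ) (2*π), ‖F k θ‖
        ≤ ∫ _ in Set.Ioc (0:ℝ) (2*π), |z|^k / k.factorial := by
          refine integral_mono ((hFint k).norm) ?_ (fun θ => hFnorm k θ)
          exact integrableOn_const (by simp [Real.volume_Ioc, ENNReal.mul_eq_top])
      _ = 2*π * (|z|^k / k.factorial) := by
          simp [Real.volume_Ioc, ENNReal.toReal_ofReal h2π, pi_pos.le]
  have key : ∫ θ in Set.Ioc (0:ℝ) (2*π), (g θ : ℂ) * Complex.exp (Complex.I * z * Real.cos θ)
      = ∑' k, ∫ θ in Set.Ioc (0:ℝ) (2*π), F k θ := by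
    have hpt : ∀ θ : ℝ, (g θ : ℂ) * Complex.exp (Complex.I * z * Real.cos θ)
        = ∑' k, F k θ := fun θ => by rw [exp_tsum, ← tsum_mul_left]
    simp only [hpt]
    exact (MeasureTheory.integral_tsum_of_summable_integral_norm hFint hsum).symm
  have hterm : ∀ k, (∫ θ in Set.Ioc (0:ℝ) (2*π), F k θ)
      = (Complex.I*z)^k / (k.factorial : ℂ) *
        ((∫ θ in (0:ℝ)..(2*π), g θ * Real.cos θ ^ k : ℝ) : ℂ) := by
    intro k
    rw [← intervalIntegral.integral_of_le h2π]
    have hpt : ∀ θ, F k θ = (Complex.I*z)^k / (k.factorial : ℂ) *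
        (((g θ * Real.cos θ ^ k : ℝ)) : ℂ) := by
      intro θ
      simp only [F]
      push_cast [mul_pow]
      ring
    simp only [hpt]
    rw [intervalIntegral.integral_const_mul, intervalIntegral.integral_ofReal]
  rw [intervalIntegral.integral_of_le h2π, key]
  exact tsum_congr hterm

open intervalIntegral in
lemma cos_rec (n : ℕ) : ∫ θ in (0:ℝ)..(2*π), Real.cos θ ^ (n+2)
    = (n+1)/(n+2) * ∫ θ in (0:ℝ)..(2*π), Real.cos θ ^ n := by
  rw [integral_cos_pow]
  simp [Real.sin_two_pi]

lemma cos_int_even (m : ℕ) : ∫ θ in (0:ℝ)..(2*π), Real.cos θ ^ (2*m)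
    = 2*π*(2*m).factorial / (4^m * ((m.factorial : ℝ))^2) := by
  induction m with
  | zero => simp
  | succ m ih =>
    have h : 2*(m+1) = 2*m + 2 := by ring
    rw [h, cos_rec, ih]
    have h1 : ((2*m+2).factorial : ℝ) = (2*m).factorial * (2*m+1) * (2*m+2) := by
      push_cast [show 2*m+2 = (2*m+1)+1 from rfl, Nat.factorial_succ]
      ring
    have h2 : ((m+1).factorial : ℝ) = m.factorial * (m+1) := by
      push_cast [Nat.factorial_succ]; ring
    have hf : (m.factorial : ℝ) ≠ 0 := Nat.cast_ne_zero.2 m.factorial_ne_zero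
    have h4 : (4:ℝ)^m ≠ 0 := by positivity
    push_cast [h1, h2]
    field_simp
    ring

open intervalIntegral in
lemma cos_int_odd (m : ℕ) : ∫ θ in (0:ℝ)..(2*π), Real.cos θ ^ (2*m+1) = 0 := by
  induction m with
  | zero => simp [integral_cos, Real.sin_two_pi]
  | succ m ih =>
    have h : 2*(m+1)+1 = (2*m+1) + 2 := by ring
    rw [h, cos_rec, ih, mul_zero]

lemma sin_cos_int (n : ℕ) : ∫ θ in (0:ℝ)..(2*π), Real.sin θ * Real.cos θ ^ n = 0 := by
  have hd : ∀ x ∈ Set.uIcc (0:ℝ) (2*π), HasDerivAt (fun y => -(Real.cos y ^ (n+1)) / (n+1))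
      (Real.sin x * Real.cos x ^ n) x := by
    intro x _
    have h := ((Real.hasDerivAt_cos x).pow (n+1)).neg.div_const ((n:ℝ)+1)
    refine h.congr_deriv ?_
    have : ((n:ℝ)+1) ≠ 0 := by positivity
    push_cast
    field_simp
  have := intervalIntegral.integral_eq_sub_of_hasDerivAt hd
    (by apply Continuous.intervalIntegrable; fun_prop)
  rw [this]
  simp [Real.cos_two_pi]

lemma besselJ0_eq (z : ℂ) : besselJ 0 z
    = ∑' m : ℕ, ((-1:ℂ)^m / ((m.factorial : ℂ) * (m.factorial : ℂ))) * (z/2)^(2*m) := by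
  unfold besselJ
  congr 1; funext m
  have h1 : (m:ℂ) + (0:ℤ) + 1 = (m:ℂ) + 1 := by push_cast; ring
  rw [h1, Complex.Gamma_nat_eq_factorial]
  have h2 : (2 * (m:ℤ) + 0) = ((2*m : ℕ) : ℤ) := by push_cast; ring
  rw [h2, zpow_natCast]

lemma besselJ2_eq (z : ℂ) : besselJ 2 z
    = ∑' m : ℕ, ((-1:ℂ)^m / ((m.factorial : ℂ) * ((m+2).factorial : ℂ))) * (z/2)^(2*m+2) := by
  unfold besselJ
  congr 1; funext m
  have h1 : (m:ℂ) + ((2:ℤ):ℂ) + 1 = ((m+2 : ℕ):ℂ) + 1 := by push_cast; ring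
  rw [h1, Complex.Gamma_nat_eq_factorial]
  have h2 : (2 * (m:ℤ) + 2) = ((2*m+2 : ℕ) : ℤ) := by push_cast; ring
  rw [h2, zpow_natCast]

lemma bessel_summand_summable (z : ℂ) (n : ℕ) :
    Summable (fun m : ℕ => ((-1:ℂ)^m / ((m.factorial : ℂ) * ((m+n).factorial : ℂ))) * (z/2)^(2*m+n)) := by
  apply Summable.of_norm
  refine Summable.of_nonneg_of_le (fun _ => norm_nonneg _) (fun m => ?_)
    ((Real.summable_pow_div_factorial (‖z/2‖^2)).mul_left (‖z/2‖^n))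
  have hfac : (1:ℝ) ≤ ((m+n).factorial : ℝ) := by exact_mod_cast Nat.one_le_iff_ne_zero.2 (m+n).factorial_ne_zero
  have hm : (0:ℝ) < (m.factorial : ℝ) := by exact_mod_cast m.factorial_pos
  rw [norm_mul, norm_div, norm_pow, norm_neg, norm_one, one_pow, norm_mul, norm_pow]
  rw [Complex.norm_natCast, Complex.norm_natCast]
  have h1 : ‖z/2‖^(2*m+n) = (‖z/2‖^2)^m * ‖z/2‖^n := by
    rw [pow_add, pow_mul]
  rw [h1]
  have h2 : (1:ℝ) / ((m.factorial:ℝ) * ((m+n).factorial : ℝ)) ≤ 1 / (m.factorial : ℝ) := by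
    exact one_div_le_one_div_of_le hm (le_mul_of_one_le_right hm.le hfac)
  calc 1 / ((m.factorial:ℝ) * ((m+n).factorial:ℝ)) * ((‖z/2‖^2)^m * ‖z/2‖^n)
      ≤ 1 / (m.factorial : ℝ) * ((‖z/2‖^2)^m * ‖z/2‖^n) := by
        apply mul_le_mul_of_nonneg_right h2 (by positivity)
    _ = ‖z/2‖^n * ((‖z/2‖^2)^m / m.factorial) := by ring

noncomputable def aa (z : ℝ) (m : ℕ) : ℂ :=
  ((-1:ℂ)^m / ((m.factorial : ℂ) * (m.factorial : ℂ))) * (((z:ℂ))/2)^(2*m)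
noncomputable def bb (z : ℝ) (m : ℕ) : ℂ :=
  ((-1:ℂ)^m / ((m.factorial : ℂ) * ((m+2).factorial : ℂ))) * (((z:ℂ))/2)^(2*m+2)
noncomputable def hh (z : ℝ) : ℕ → ℂ
  | 0 => 0
  | (m+1) => π * bb z m

lemma hh_zero (z : ℝ) : hh z 0 = 0 := rfl
lemma hh_succ (z : ℝ) (m : ℕ) : hh z (m+1) = π * bb z m := rfl

lemma summable_aa (z : ℝ) : Summable (aa z) := by
  unfold aa
  simpa using bessel_summand_summable (z:ℂ) 0

lemma summable_bb (z : ℝ) : Summable (bb z) := by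
  unfold bb
  exact bessel_summand_summable (z:ℂ) 2

lemma besselJ0_eq' (z : ℝ) : besselJ 0 (z:ℂ) = ∑' m, aa z m := besselJ0_eq (z:ℂ)
lemma besselJ2_eq' (z : ℝ) : besselJ 2 (z:ℂ) = ∑' m, bb z m := besselJ2_eq (z:ℂ)

lemma support_even {f : ℕ → ℂ} (hf : ∀ m, f (2*m+1) = 0) :
    ∀ k ∉ Set.range (fun m : ℕ => 2*m), f k = 0 := by
  intro k hk
  rcases Nat.even_or_odd k with he | ho
  · obtain ⟨m, rfl⟩ := he
    exact absurd ⟨m, two_mul m⟩ hk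
  · obtain ⟨m, rfl⟩ := ho
    exact hf m

lemma tsum_even_of_odd_zero {f : ℕ → ℂ} (hf : ∀ m, f (2*m+1) = 0) :
    ∑' k, f k = ∑' m, f (2*m) :=
  ((mul_right_injective₀ (two_ne_zero) : Function.Injective (fun m : ℕ => 2*m)).tsum_eq
    (Function.support_subset_iff'.2 (support_even hf))).symm

lemma Iz_pow_even (z : ℝ) (m : ℕ) : (Complex.I * z)^(2*m) = (-1:ℂ)^m * (z:ℂ)^(2*m) := by
  rw [pow_mul, pow_mul]
  congr 1
  rw [mul_pow, Complex.I_sq]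
  ring

lemma half_pow (z : ℝ) (m : ℕ) : ((z:ℂ)/2)^(2*m) = (z:ℂ)^(2*m) / 4^m := by
  rw [div_pow]
  congr 1
  rw [pow_mul]
  norm_num

lemma S1 (z : ℝ) : ∑' k : ℕ, (Complex.I * z)^k / (k.factorial : ℂ) *
    ((∫ θ in (0:ℝ)..(2*π), Real.cos θ ^ k : ℝ) : ℂ) = 2 * π * besselJ 0 z := by
  rw [tsum_even_of_odd_zero (fun m => by rw [cos_int_odd]; simp), besselJ0_eq', ← tsum_mul_left]
  refine tsum_congr fun m => ?_
  unfold aa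
  rw [cos_int_even, Iz_pow_even]
  have h4 : ((4:ℂ))^m ≠ 0 := pow_ne_zero _ (by norm_num)
  have hf : ((m.factorial:ℂ)) ≠ 0 := Nat.cast_ne_zero.2 m.factorial_ne_zero
  have hf2 : (((2*m).factorial:ℂ)) ≠ 0 := Nat.cast_ne_zero.2 (2*m).factorial_ne_zero
  rw [half_pow]
  push_cast
  field_simp

lemma fact_succ_cast (n : ℕ) : ((n+1).factorial : ℂ) = (n.factorial : ℂ) * (n+1) := by
  push_cast [Nat.factorial_succ]; ring

lemma S2 (z : ℝ) : ∑' k : ℕ, (Complex.I * z)^k / (k.factorial : ℂ) *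
    ((∫ θ in (0:ℝ)..(2*π), Real.cos θ ^ (k+2) : ℝ) : ℂ)
    = π * besselJ 0 z - π * besselJ 2 z := by
  have hsh : Summable (hh z) := by
    refine (summable_nat_add_iff 1).1 ?_
    simpa [hh_succ] using ((summable_bb z).mul_left ((π:ℂ)))
  have hth : ∑' m, hh z m = π * besselJ 2 z := by
    rw [besselJ2_eq', ← tsum_mul_left, hsh.tsum_eq_zero_add]
    simp only [hh_zero, hh_succ, zero_add]
  have hterm : ∀ m, (Complex.I * z)^(2*m) / (((2*m).factorial : ℂ)) *
      ((∫ θ in (0:ℝ)..(2*π), Real.cos θ ^ (2*m+2) : ℝ) : ℂ) = π * aa z m - hh z m := by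
    intro m
    have he : (2*m+2) = 2*(m+1) := by ring
    rw [he, cos_int_even, Iz_pow_even]
    cases m with
    | zero =>
      rw [hh_zero, sub_zero]
      unfold aa
      norm_num [Nat.factorial]
      ring
    | succ n =>
      rw [hh_succ]
      unfold aa bb
      have e1 : ((2*(n+1+1)).factorial : ℂ) = ((2*(n+1)).factorial : ℂ) * ((2*n+3) * (2*n+4)) := by
        have h : 2*(n+1+1) = (2*(n+1)+1)+1 := by ring
        rw [h, fact_succ_cast, show 2*(n+1)+1 = (2*(n+1))+1 from rfl, fact_succ_cast]
        push_cast; ring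
      have e2 : (((n+1+1)).factorial : ℂ) = ((n+1).factorial : ℂ) * (n+2) := by
        rw [show n+1+1 = (n+1)+1 from rfl, fact_succ_cast]; push_cast; ring_nf
      have e3 : (((n+1)).factorial : ℂ) = (n.factorial : ℂ) * (n+1) := by
        rw [fact_succ_cast]
      have h4 : ((4:ℂ))^(n+1) ≠ 0 := pow_ne_zero _ (by norm_num)
      have h4' : ((4:ℂ))^(n+1+1) ≠ 0 := pow_ne_zero _ (by norm_num)
      have hfn : ((n.factorial:ℂ)) ≠ 0 := Nat.cast_ne_zero.2 n.factorial_ne_zero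
      have hf1 : (((2*(n+1)).factorial:ℂ)) ≠ 0 := Nat.cast_ne_zero.2 (2*(n+1)).factorial_ne_zero
      have hn1 : ((n:ℂ)+1) ≠ 0 := Nat.cast_add_one_ne_zero n
      have hn2 : ((n:ℂ)+2) ≠ 0 := by
        have h' : (((n+2:ℕ)):ℂ) ≠ 0 := Nat.cast_ne_zero.2 (by omega)
        push_cast at h'
        exact h'
      have hp : ((z:ℂ)/2)^(2*n+2) = (z:ℂ)^(2*(n+1))/4^(n+1) := by
        rw [show 2*n+2 = 2*(n+1) from by ring, half_pow]
      push_cast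
      rw [e1, e2, e3, half_pow, hp, pow_succ ((4:ℂ)) (n+1), pow_succ ((-1:ℂ)) n]
      have hGn1 : ((n.factorial:ℂ)) * ((n:ℂ)+1) ≠ 0 := mul_ne_zero hfn hn1
      generalize hF : (((2*(n+1)).factorial : ℕ) : ℂ) = F at hf1 ⊢
      generalize hG : ((n.factorial : ℕ) : ℂ) = G at hfn hGn1 ⊢
      generalize hQ : ((4:ℂ))^(n+1) = Q at h4 ⊢
      generalize hS : ((-1:ℂ))^n = S
      generalize hZ : ((z:ℂ))^(2*(n+1)) = Z
      have hD1 : (G*((n:ℂ)+1)*(G*((n:ℂ)+1))) * Q ≠ 0 :=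
        mul_ne_zero (mul_ne_zero hGn1 hGn1) h4
      have hD2 : (G*(G*((n:ℂ)+1)*((n:ℂ)+2))) * Q ≠ 0 :=
        mul_ne_zero (mul_ne_zero hfn (mul_ne_zero hGn1 hn2)) h4
      have hDEN : F * (Q*4*(G*((n:ℂ)+1)*((n:ℂ)+2))^2) ≠ 0 :=
        mul_ne_zero hf1 (mul_ne_zero (mul_ne_zero h4 (by norm_num))
          (pow_ne_zero _ (mul_ne_zero hGn1 hn2)))
      rw [div_mul_div_comm, div_mul_div_comm, div_mul_div_comm, mul_div_assoc', mul_div_assoc',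
        div_sub_div _ _ hD1 hD2, div_eq_div_iff hDEN (mul_ne_zero hD1 hD2)]
      ring
  calc ∑' k : ℕ, (Complex.I * z)^k / (k.factorial : ℂ) *
      ((∫ θ in (0:ℝ)..(2*π), Real.cos θ ^ (k+2) : ℝ) : ℂ)
      = ∑' m : ℕ, (Complex.I * z)^(2*m) / (((2*m).factorial : ℂ)) *
        ((∫ θ in (0:ℝ)..(2*π), Real.cos θ ^ (2*m+2) : ℝ) : ℂ) := by
        refine tsum_even_of_odd_zero (fun m => ?_)
        rw [show (2*m+1)+2 = 2*(m+1)+1 from by ring, cos_int_odd]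
        simp
    _ = ∑' m : ℕ, (π * aa z m - hh z m) := tsum_congr hterm
    _ = π * besselJ 0 z - π * besselJ 2 z := by
        rw [Summable.tsum_sub (((summable_aa z).mul_left ((π:ℂ)))) hsh, tsum_mul_left, hth, besselJ0_eq']

lemma Dconst (z : ℝ) : ∫ θ in (0:ℝ)..(2*π), Complex.exp (Complex.I * z * Real.cos θ)
    = 2 * π * besselJ 0 z := by
  have h := swap_lemma (fun _ => 1) continuous_const (fun θ => by norm_num) z
  simp only [Complex.ofReal_one, one_mul] at h
  rw [h, ← S1 z]

lemma D0 (z : ℝ) : ∫ θ in (0:ℝ)..(2*π), ((Real.cos θ : ℂ))^2 * Complex.exp (Complex.I * z * Real.cos θ)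
    = π * besselJ 0 z - π * besselJ 2 z := by
  have h := swap_lemma (fun θ => Real.cos θ ^ 2) (by fun_prop)
    (fun θ => by
      simp only [_root_.abs_pow]
      calc |Real.cos θ|^2 ≤ 1^2 := pow_le_pow_left₀ (abs_nonneg _) (Real.abs_cos_le_one θ) 2
        _ = 1 := one_pow 2) z
  have h2 : ∀ θ : ℝ, ((Real.cos θ ^ 2 : ℝ) : ℂ) * Complex.exp (Complex.I * z * Real.cos θ)
      = ((Real.cos θ : ℂ))^2 * Complex.exp (Complex.I * z * Real.cos θ) := by
    intro θ; push_cast; ring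
  simp only [h2] at h
  rw [h, ← S2 z]
  congr 1
  funext k
  congr 2
  apply intervalIntegral.integral_congr
  intro θ _
  simp only [pow_add]
  ring

lemma D1 (z : ℝ) : ∫ θ in (0:ℝ)..(2*π), ((Real.sin θ : ℂ))^2 * Complex.exp (Complex.I * z * Real.cos θ)
    = π * besselJ 0 z + π * besselJ 2 z := by
  have hpt : ∀ θ : ℝ, ((Real.sin θ : ℂ))^2 * Complex.exp (Complex.I * z * Real.cos θ)
      = Complex.exp (Complex.I * z * Real.cos θ)
        - ((Real.cos θ : ℂ))^2 * Complex.exp (Complex.I * z * Real.cos θ) := by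
    intro θ
    push_cast
    linear_combination (Complex.exp (Complex.I * z * Complex.cos θ)) * (Complex.sin_sq_add_cos_sq (θ:ℂ))
  simp only [hpt]
  rw [intervalIntegral.integral_sub (by apply Continuous.intervalIntegrable; fun_prop)
    (by apply Continuous.intervalIntegrable; fun_prop), Dconst, D0]
  ring

lemma Dcross (z : ℝ) : ∫ θ in (0:ℝ)..(2*π),
    ((Real.sin θ : ℂ)) * ((Real.cos θ : ℂ)) * Complex.exp (Complex.I * z * Real.cos θ) = 0 := by
  have h := swap_lemma (fun θ => Real.sin θ * Real.cos θ) (by fun_prop)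
    (fun θ => by
      rw [abs_mul]
      calc |Real.sin θ| * |Real.cos θ| ≤ 1 * 1 :=
            mul_le_mul (Real.abs_sin_le_one θ) (Real.abs_cos_le_one θ) (abs_nonneg _) one_pos.le
        _ = 1 := one_mul 1) z
  have h2 : ∀ θ : ℝ, ((Real.sin θ * Real.cos θ : ℝ) : ℂ) * Complex.exp (Complex.I * z * Real.cos θ)
      = ((Real.sin θ : ℂ)) * ((Real.cos θ : ℂ)) * Complex.exp (Complex.I * z * Real.cos θ) := by
    intro θ; push_cast; ring
  simp only [h2] at h
  rw [h]
  have hz : ∀ k : ℕ, (∫ θ in (0:ℝ)..(2*π), (fun θ => Real.sin θ * Real.cos θ) θ * Real.cos θ ^ k) = 0 := by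
    intro k
    have e : (∫ θ in (0:ℝ)..(2*π), (fun θ => Real.sin θ * Real.cos θ) θ * Real.cos θ ^ k)
        = ∫ θ in (0:ℝ)..(2*π), Real.sin θ * Real.cos θ ^ (k+1) := by
      apply intervalIntegral.integral_congr
      intro θ _
      simp only [pow_succ]
      ring
    rw [e, sin_cos_int]
  simp only [hz]
  simp

lemma shift_int (f : ℝ → ℂ) (hper : Function.Periodic f (2*π)) (φ : ℝ) :
    ∫ θ in (0:ℝ)..(2*π), f (θ - φ) = ∫ θ in (0:ℝ)..(2*π), f θ := by
  rw [intervalIntegral.integral_comp_sub_right f φ]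
  have := hper.intervalIntegral_add_eq (-φ) 0
  simpa [zero_add, neg_add_eq_sub] using this

end EmatProofAux

/-- `E(κ,x,y) = π Qᵀ diag(J₀(z) − J₂(z), J₀(z) + J₂(z)) Q` with `z = κ|x−y|`,
for any rotation matrix `Q` mapping `x−y` to `|x−y| e₁`. -/
theorem Emat_eq (κ : ℝ) (hκ : 0 < κ) (x y : EuclideanSpace ℝ (Fin 2)) (hxy : x ≠ y)
    (Q : Matrix (Fin 2) (Fin 2) ℝ) (hQ : Q * Qᵀ = 1) (hdet : Q.det = 1)
    (hmap : Q.mulVec (fun i => x i - y i) = fun i => if i = 0 then ‖x - y‖ else 0) :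
    Emat κ x y = (π : ℂ) •
      ((Q.map ((↑) : ℝ → ℂ))ᵀ *
        Matrix.diagonal ![besselJ 0 ((κ * ‖x - y‖ : ℝ) : ℂ) - besselJ 2 ((κ * ‖x - y‖ : ℝ) : ℂ),
          besselJ 0 ((κ * ‖x - y‖ : ℝ) : ℂ) + besselJ 2 ((κ * ‖x - y‖ : ℝ) : ℂ)] *
        Q.map ((↑) : ℝ → ℂ)) := by
  -- notation
  set r : ℝ := ‖x - y‖ with hr
  set z : ℝ := κ * r with hz
  set c : ℝ := Q 0 0 with hc
  set s : ℝ := Q 0 1 with hs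
  -- orthogonality facts
  have h00 : c * c + s * s = 1 := by
    have h := congrFun (congrFun (congrArg (fun M => M) hQ) 0) 0
    simpa [Matrix.mul_apply, Fin.sum_univ_two, Matrix.one_apply, Matrix.transpose_apply, hc, hs]
      using h
  have h01 : c * Q 1 0 + s * Q 1 1 = 0 := by
    have h := congrFun (congrFun (congrArg (fun M => M) hQ) 0) 1
    simpa [Matrix.mul_apply, Fin.sum_univ_two, Matrix.one_apply, Matrix.transpose_apply, hc, hs]
      using h
  have hd : c * Q 1 1 - s * Q 1 0 = 1 := by
    have h := hdet
    rw [Matrix.det_fin_two] at h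
    linarith [h]
  have hQ10 : Q 1 0 = -s := by
    linear_combination (-(Q 1 0)) * h00 + c * h01 - s * hd
  have hQ11 : Q 1 1 = c := by
    linear_combination (-(Q 1 1)) * h00 + s * h01 + c * hd
  -- components of x - y
  have hm0 : c * (x 0 - y 0) + s * (x 1 - y 1) = r := by
    have h := congrFun hmap 0
    simpa [Matrix.mulVec, dotProduct, Fin.sum_univ_two, hc, hs] using h
  have hm1 : -s * (x 0 - y 0) + c * (x 1 - y 1) = 0 := by
    have h := congrFun hmap 1
    simp only [Matrix.mulVec, dotProduct, Fin.sum_univ_two, Fin.isValue,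
      if_neg (one_ne_zero)] at h
    rw [hQ10, hQ11] at h
    linear_combination h
  have hu0 : x 0 - y 0 = c * r := by
    linear_combination c * hm0 - s * hm1 - (x 0 - y 0) * h00
  have hu1 : x 1 - y 1 = s * r := by
    linear_combination s * hm0 + c * hm1 - (x 1 - y 1) * h00
  -- the angle φ
  have hw : (Complex.mk c s) ≠ 0 := by
    intro h0
    have : c = 0 ∧ s = 0 := ⟨congrArg Complex.re h0, congrArg Complex.im h0⟩
    rw [this.1, this.2] at h00
    norm_num at h00
  have habs : ‖Complex.mk c s‖ = 1 := by
    rw [Complex.norm_def, Complex.normSq_mk]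
    rw [h00, Real.sqrt_one]
  set φ : ℝ := Complex.arg (Complex.mk c s) with hφ
  have hcφ : Real.cos φ = c := by
    rw [hφ, Complex.cos_arg hw, habs]
    simp
  have hsφ : Real.sin φ = s := by
    rw [hφ, Complex.sin_arg, habs]
    simp
  -- entrywise
  ext i j
  -- RHS entry
  have hRHS : ((π : ℂ) • ((Q.map ((↑) : ℝ → ℂ))ᵀ *
      Matrix.diagonal ![besselJ 0 ((z : ℝ) : ℂ) - besselJ 2 ((z : ℝ) : ℂ),
        besselJ 0 ((z : ℝ) : ℂ) + besselJ 2 ((z : ℝ) : ℂ)] * Q.map ((↑) : ℝ → ℂ))) i j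
      = (π:ℂ) * ((Q 0 i : ℂ) * (besselJ 0 ((z:ℝ):ℂ) - besselJ 2 ((z:ℝ):ℂ)) * (Q 0 j : ℂ)
        + (Q 1 i : ℂ) * (besselJ 0 ((z:ℝ):ℂ) + besselJ 2 ((z:ℝ):ℂ)) * (Q 1 j : ℂ)) := by
    simp [Matrix.mul_apply, Fin.sum_univ_two, Matrix.diagonal, Matrix.transpose_apply,
      Matrix.map_apply, Matrix.smul_apply, Matrix.one_apply]
  rw [hRHS]
  -- LHS entry
  show (∫ θ in (0:ℝ)..(2 * π),
      ((circVec θ i : ℂ) * (circVec θ j : ℂ)) *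
        Complex.exp (Complex.I * (κ : ℂ) *
          ((circVec θ 0 * (x 0 - y 0) + circVec θ 1 * (x 1 - y 1) : ℝ) : ℂ))) = _
  -- rewrite exponent using the angle
  have hexp : ∀ θ : ℝ, Complex.I * (κ : ℂ) *
      ((circVec θ 0 * (x 0 - y 0) + circVec θ 1 * (x 1 - y 1) : ℝ) : ℂ)
      = Complex.I * (z : ℂ) * ((Real.cos (θ - φ) : ℝ) : ℂ) := by
    intro θ
    have h' : circVec θ 0 * (x 0 - y 0) + circVec θ 1 * (x 1 - y 1) = r * Real.cos (θ - φ) := by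
      simp only [circVec, Matrix.cons_val_zero, Matrix.cons_val_one, Matrix.head_cons]
      rw [hu0, hu1, Real.cos_sub, hcφ, hsφ]
      ring
    rw [h', hz]
    push_cast
    ring
  simp only [hexp]
  -- the shifted function
  set f : ℝ → ℂ := fun ψ => ((circVec (ψ + φ) i : ℂ) * (circVec (ψ + φ) j : ℂ)) *
    Complex.exp (Complex.I * (z : ℂ) * ((Real.cos ψ : ℝ) : ℂ)) with hf
  have hfp : Function.Periodic f (2*π) := by
    intro ψ
    have e1 : ψ + 2*π + φ = (ψ + φ) + 2*π := by ring
    simp only [hf, e1, circVec, Matrix.cons_val_zero, Matrix.cons_val_one, Matrix.head_cons]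
    rw [Real.cos_add_two_pi, Real.sin_add_two_pi, Real.cos_add_two_pi]
  have hfe : ∀ θ : ℝ, ((circVec θ i : ℂ) * (circVec θ j : ℂ)) *
      Complex.exp (Complex.I * (z : ℂ) * ((Real.cos (θ - φ) : ℝ) : ℂ)) = f (θ - φ) := by
    intro θ
    simp only [hf]
    have e : θ - φ + φ = θ := by ring
    rw [e]
  simp only [hfe]
  rw [shift_int f hfp φ]
  -- expand circVec (ψ + φ)
  have hcv : ∀ (i : Fin 2) (ψ : ℝ), circVec (ψ + φ) i
      = Q 0 i * Real.cos ψ + Q 1 i * Real.sin ψ := by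
    intro i ψ
    fin_cases i
    · show circVec (ψ + φ) 0 = Q 0 0 * Real.cos ψ + Q 1 0 * Real.sin ψ
      simp only [circVec, Matrix.cons_val_zero]
      rw [Real.cos_add, hcφ, hsφ, hQ10, ← hc]
      ring
    · show circVec (ψ + φ) 1 = Q 0 1 * Real.cos ψ + Q 1 1 * Real.sin ψ
      simp only [circVec, Matrix.cons_val_one, Matrix.head_cons, Matrix.cons_val_zero]
      rw [Real.sin_add, hcφ, hsφ, hQ11, ← hs]
      ring
  have hfexp : ∀ ψ : ℝ, f ψ =
      ((Q 0 i : ℂ) * (Q 0 j : ℂ)) * (((Real.cos ψ : ℂ))^2 * Complex.exp (Complex.I * z * Real.cos ψ))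
      + (((Q 1 i : ℂ) * (Q 1 j : ℂ)) * (((Real.sin ψ : ℂ))^2 * Complex.exp (Complex.I * z * Real.cos ψ))
      + ((Q 0 i : ℂ) * (Q 1 j : ℂ) + (Q 1 i : ℂ) * (Q 0 j : ℂ)) *
          (((Real.sin ψ : ℂ)) * ((Real.cos ψ : ℂ)) * Complex.exp (Complex.I * z * Real.cos ψ))) := by
    intro ψ
    simp only [hf, hcv]
    push_cast
    ring
  simp only [hfexp]
  rw [intervalIntegral.integral_add (by apply Continuous.intervalIntegrable; fun_prop)
    (by apply Continuous.intervalIntegrable; fun_prop)]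
  rw [intervalIntegral.integral_add (by apply Continuous.intervalIntegrable; fun_prop)
    (by apply Continuous.intervalIntegrable; fun_prop)]
  rw [intervalIntegral.integral_const_mul, intervalIntegral.integral_const_mul,
    intervalIntegral.integral_const_mul]
  rw [D0, D1, Dcross]
  ring
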